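/- Let ν ∈ ℤ_{>0}^m and μ ∈ ℤ_{>0}^n with ∑_{i∈I} ν_i = ∑_{j∈J} μ_j. If E ⊆ I × J is such that T_E(ν,μ) is nonempty and the ERP number of T_E(ν,μ) equals d, then |E| ≥ m + n − d; moreover, if d < d_⋆ then |E| ≥ m + n − d + 1. -/

import Mathlib

open scoped Classical

noncomputable section

variable {m n : ℕ}

/-- The transportation polytope `T_E(ν,μ)`: nonnegative `m × n` matrices with row sums `ν`,
column sums `μ`, supported on the edge set `E`. -/
def transportationPolytope (ν : Fin m → ℝ) (μ : Fin n → ℝ)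
    (E : Finset (Fin m × Fin n)) : Set (Fin m → Fin n → ℝ) :=
  {x | (∀ i j, 0 ≤ x i j) ∧ (∀ i, ∑ j, x i j = ν i) ∧
    (∀ j, ∑ i, x i j = μ j) ∧ ∀ i j, (i, j) ∉ E → x i j = 0}

/-- The neighborhood `N_F(S) = {j : ∃ i ∈ S, (i,j) ∈ F}`. -/
def nbr (F : Finset (Fin m × Fin n)) (S : Finset (Fin m)) : Finset (Fin n) :=
  Finset.univ.filter fun j => ∃ i ∈ S, (i, j) ∈ F

/-- `ν` satisfies the capacity condition for `(μ, E)`. -/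
def capacityCond (ν : Fin m → ℝ) (μ : Fin n → ℝ) (E : Finset (Fin m × Fin n)) : Prop :=
  ∀ S : Finset (Fin m), ∑ i ∈ S, ν i ≤ ∑ j ∈ nbr E S, μ j

/-- The CRP condition for `(ν, μ, E)`. -/
def crpCond (ν : Fin m → ℝ) (μ : Fin n → ℝ) (E : Finset (Fin m × Fin n)) : Prop :=
  (∑ i, ν i) = (∑ j, μ j) ∧
  ∀ S : Finset (Fin m), S.Nonempty → S ≠ Finset.univ →
    ∑ i ∈ S, ν i < ∑ j ∈ nbr E S, μ j

/-- The bipartite simple graph `G(F)` on `I ⊔ J` determined by the edge set `F`. -/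
def bipartiteGraph (F : Finset (Fin m × Fin n)) : SimpleGraph (Fin m ⊕ Fin n) :=
  SimpleGraph.fromRel fun u v => ∃ i j, u = Sum.inl i ∧ v = Sum.inr j ∧ (i, j) ∈ F

/-- The number of connected components of `G(F)`. -/
def numComponents (F : Finset (Fin m × Fin n)) : ℕ :=
  Nat.card (bipartiteGraph F).ConnectedComponent

/-- The set `E_r` of redundant edges of `T_E(ν,μ)`. -/
def redundantEdges (ν : Fin m → ℝ) (μ : Fin n → ℝ)
    (E : Finset (Fin m × Fin n)) : Finset (Fin m × Fin n) :=
  E.filter fun e => ∀ x ∈ transportationPolytope ν μ E, x e.1 e.2 = 0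

/-- The ERP number of `T_E(ν,μ)`: the number of connected components of `G(E ∖ E_r)`. -/
def erpNumber (ν : Fin m → ℝ) (μ : Fin n → ℝ) (E : Finset (Fin m × Fin n)) : ℕ :=
  numComponents (E \ redundantEdges ν μ E)

/-- The support edge set `B(x) = {(i,j) ∈ E : x_{ij} > 0}`. -/
def supportEdges (E : Finset (Fin m × Fin n)) (x : Fin m → Fin n → ℝ) :
    Finset (Fin m × Fin n) :=
  E.filter fun e => 0 < x e.1 e.2

/-- The indicator vector `𝟙_S ∈ ℝ^m` of `S ⊆ I`. -/
def indicatorVec (S : Finset (Fin m)) : Fin m → ℝ := fun i => if i ∈ S then 1 else 0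

/-- `S ⊆ I` is binding if `∑_{i∈S} ν_i = ∑_{j∈N_E(S)} μ_j`. -/
def IsBinding (ν : Fin m → ℝ) (μ : Fin n → ℝ) (E : Finset (Fin m × Fin n))
    (S : Finset (Fin m)) : Prop :=
  (∑ i ∈ S, ν i) = ∑ j ∈ nbr E S, μ j

/-- The greatest common divisor of all `m + n` components of `ν` and `μ`. -/
def gcdVec (ν : Fin m → ℕ) (μ : Fin n → ℕ) : ℕ :=
  Nat.gcd (Finset.univ.gcd ν) (Finset.univ.gcd μ)

/-- `d_⋆ = max {1, m + n − (∑ᵢ νᵢ) / gcd(ν,μ)}`. -/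
def dStar (ν : Fin m → ℕ) (μ : Fin n → ℕ) : ℕ :=
  max 1 (m + n - (∑ i, ν i) / gcdVec ν μ)

/-- The CRP-gap `δ_F(ν,μ)` of the edge set `F` (computed with respect to the redundant
edges of `T_F(ν,μ)`). -/
def crpGap (ν : Fin m → ℝ) (μ : Fin n → ℝ) (F : Finset (Fin m × Fin n)) : ℝ :=
  sInf {t : ℝ | ∃ C : Finset (Fin m),
    (∑ i ∈ C, ν i) < (∑ j ∈ nbr (F \ redundantEdges ν μ F) C, μ j) ∧
    t = (∑ j ∈ nbr F C, μ j) - ∑ i ∈ C, ν i}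

/-- The CRP-graph relation `R` on the connected components of `G(E ∖ E_r)`:
`R c₁ c₂` holds iff `c₁ ≠ c₂` and some edge `(i,j) ∈ E` has `i` in the demand side of `c₁`
and `j` in the supply side of `c₂`. -/
def crpRel (ν : Fin m → ℝ) (μ : Fin n → ℝ) (E : Finset (Fin m × Fin n)) :
    (bipartiteGraph (E \ redundantEdges ν μ E)).ConnectedComponent →
    (bipartiteGraph (E \ redundantEdges ν μ E)).ConnectedComponent → Prop :=
  fun c₁ c₂ => c₁ ≠ c₂ ∧ ∃ i j, (i, j) ∈ E ∧
    (bipartiteGraph (E \ redundantEdges ν μ E)).connectedComponentMk (Sum.inl i) = c₁ ∧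
    (bipartiteGraph (E \ redundantEdges ν μ E)).connectedComponentMk (Sum.inr j) = c₂

end

section AuxLemmas

open SimpleGraph

variable {V : Type*}

lemma reachable_sup_edge_cases {G : SimpleGraph V} {s t u v : V}
    (h : (G ⊔ SimpleGraph.edge s t).Reachable u v) :
    G.Reachable u v ∨ (G.Reachable u s ∧ G.Reachable t v) ∨
      (G.Reachable u t ∧ G.Reachable s v) := by
  obtain ⟨p⟩ := h
  induction p with
  | nil => exact Or.inl (Reachable.refl _)
  | cons h p ih =>
    rcases (sup_adj _ _ _ _).mp h with hG | hE
    · rcases ih with h1 | ⟨h1, h2⟩ | ⟨h1, h2⟩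
      · exact Or.inl (hG.reachable.trans h1)
      · exact Or.inr (Or.inl ⟨hG.reachable.trans h1, h2⟩)
      · exact Or.inr (Or.inr ⟨hG.reachable.trans h1, h2⟩)
    · rw [edge_adj] at hE
      rcases hE.1 with ⟨rfl, rfl⟩ | ⟨rfl, rfl⟩
      · rcases ih with h1 | ⟨h1, h2⟩ | ⟨h1, h2⟩
        · exact Or.inr (Or.inl ⟨Reachable.refl _, h1⟩)
        · exact Or.inr (Or.inl ⟨Reachable.refl _, h2⟩)
        · exact Or.inl h2
      · rcases ih with h1 | ⟨h1, h2⟩ | ⟨h1, h2⟩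
        · exact Or.inr (Or.inr ⟨Reachable.refl _, h1⟩)
        · exact Or.inl h2
        · exact Or.inr (Or.inr ⟨Reachable.refl _, h2⟩)

lemma card_cc_sup_edge_le [Finite V] (G : SimpleGraph V) (s t : V) :
    Nat.card G.ConnectedComponent ≤
      Nat.card (G ⊔ SimpleGraph.edge s t).ConnectedComponent + 1 := by
  classical
  haveI : Finite (G ⊔ SimpleGraph.edge s t).ConnectedComponent := Quot.finite _
  haveI : Finite G.ConnectedComponent := Quot.finite _
  set H := G ⊔ SimpleGraph.edge s t with hH
  have hle : G ≤ H := le_sup_left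
  set φ : G.ConnectedComponent → H.ConnectedComponent :=
    SimpleGraph.ConnectedComponent.map (SimpleGraph.Hom.ofLE hle) with hφ
  have hφmk : ∀ v : V, φ (G.connectedComponentMk v) = H.connectedComponentMk v := by
    intro v
    simp [hφ]
  have key : ∀ c c', φ c = φ c' → c = c' ∨
      ((c = G.connectedComponentMk s ∨ c = G.connectedComponentMk t) ∧
       (c' = G.connectedComponentMk s ∨ c' = G.connectedComponentMk t)) := by
    intro c c'
    refine SimpleGraph.ConnectedComponent.ind₂ (fun u v h => ?_) c c'
    rw [hφmk, hφmk] at h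
    have hr : H.Reachable u v := (SimpleGraph.ConnectedComponent.eq).mp h
    rcases reachable_sup_edge_cases hr with h1 | ⟨h1, h2⟩ | ⟨h1, h2⟩
    · exact Or.inl (SimpleGraph.ConnectedComponent.sound h1)
    · exact Or.inr ⟨Or.inl (SimpleGraph.ConnectedComponent.sound h1),
        Or.inr (SimpleGraph.ConnectedComponent.sound h2.symm)⟩
    · exact Or.inr ⟨Or.inr (SimpleGraph.ConnectedComponent.sound h1),
        Or.inl (SimpleGraph.ConnectedComponent.sound h2.symm)⟩
  let f : G.ConnectedComponent → H.ConnectedComponent ⊕ Unit := fun c =>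
    if c = G.connectedComponentMk s then Sum.inr () else Sum.inl (φ c)
  have hinj : Function.Injective f := by
    intro c c' hcc
    by_cases h1 : c = G.connectedComponentMk s <;>
      by_cases h2 : c' = G.connectedComponentMk s <;>
      simp only [f, h1, h2, if_pos, if_neg, if_true, if_false, reduceIte] at hcc
    · exact h1.trans h2.symm
    · exact absurd hcc (by simp)
    · exact absurd hcc (by simp)
    · have := key c c' (by exact Sum.inl.inj hcc)
      rcases this with h | ⟨ha, hb⟩
      · exact h
      · rcases ha with ha | ha
        · exact absurd ha h1
        · rcases hb with hb | hb
          · exact absurd hb h2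
          · exact ha.trans hb.symm
  have h2 := Nat.card_le_card_of_injective f hinj
  rw [Nat.card_sum] at h2
  simpa using h2

lemma card_cc_sup_edge_eq [Finite V] (G : SimpleGraph V) {s t : V} (hst : G.Reachable s t) :
    Nat.card (G ⊔ SimpleGraph.edge s t).ConnectedComponent =
      Nat.card G.ConnectedComponent := by
  set H := G ⊔ SimpleGraph.edge s t with hH
  have hle : G ≤ H := le_sup_left
  set φ : G.ConnectedComponent → H.ConnectedComponent :=
    SimpleGraph.ConnectedComponent.map (SimpleGraph.Hom.ofLE hle) with hφ
  have hφmk : ∀ v : V, φ (G.connectedComponentMk v) = H.connectedComponentMk v := by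
    intro v
    simp [hφ]
  have hbij : Function.Bijective φ := by
    constructor
    · intro c c'
      refine SimpleGraph.ConnectedComponent.ind₂ (fun u v h => ?_) c c'
      rw [hφmk, hφmk] at h
      have hr : H.Reachable u v := (SimpleGraph.ConnectedComponent.eq).mp h
      rcases reachable_sup_edge_cases hr with h1 | ⟨h1, h2⟩ | ⟨h1, h2⟩
      · exact SimpleGraph.ConnectedComponent.sound h1
      · exact SimpleGraph.ConnectedComponent.sound (h1.trans (hst.trans h2))
      · exact SimpleGraph.ConnectedComponent.sound (h1.trans (hst.symm.trans h2))
    · refine SimpleGraph.ConnectedComponent.ind (fun v => ?_)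
      exact ⟨G.connectedComponentMk v, hφmk v⟩
  exact (Nat.card_eq_of_bijective φ hbij).symm

lemma bipartite_adj {m n : ℕ} {F : Finset (Fin m × Fin n)} {i : Fin m} {j : Fin n}
    (hij : (i, j) ∈ F) : (bipartiteGraph F).Adj (Sum.inl i) (Sum.inr j) := by
  rw [bipartiteGraph, SimpleGraph.fromRel_adj]
  exact ⟨by simp, Or.inl ⟨i, j, rfl, rfl, hij⟩⟩

lemma bipartiteGraph_insert {m n : ℕ} (e : Fin m × Fin n) (F : Finset (Fin m × Fin n)) :
    bipartiteGraph (insert e F) =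
      bipartiteGraph F ⊔ SimpleGraph.edge (Sum.inl e.1) (Sum.inr e.2) := by
  ext u v
  simp only [bipartiteGraph, SimpleGraph.fromRel_adj, SimpleGraph.sup_adj,
    SimpleGraph.edge_adj, Finset.mem_insert]
  constructor
  · rintro ⟨hne, (⟨i, j, rfl, rfl, (he | hm)⟩ | ⟨i, j, rfl, rfl, (he | hm)⟩)⟩
    · exact Or.inr ⟨Or.inl ⟨by rw [← he], by rw [← he]⟩, hne⟩
    · exact Or.inl ⟨hne, Or.inl ⟨i, j, rfl, rfl, hm⟩⟩
    · exact Or.inr ⟨Or.inr ⟨by rw [← he], by rw [← he]⟩, hne⟩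
    · exact Or.inl ⟨hne, Or.inr ⟨i, j, rfl, rfl, hm⟩⟩
  · rintro (⟨hne, (⟨i, j, rfl, rfl, hm⟩ | ⟨i, j, rfl, rfl, hm⟩)⟩ | ⟨(⟨rfl, rfl⟩ | ⟨rfl, rfl⟩), hne⟩)
    · exact ⟨hne, Or.inl ⟨i, j, rfl, rfl, Or.inr hm⟩⟩
    · exact ⟨hne, Or.inr ⟨i, j, rfl, rfl, Or.inr hm⟩⟩
    · exact ⟨hne, Or.inl ⟨e.1, e.2, rfl, rfl, Or.inl rfl⟩⟩
    · exact ⟨hne, Or.inr ⟨e.1, e.2, rfl, rfl, Or.inl rfl⟩⟩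

lemma bipartiteGraph_empty {m n : ℕ} : bipartiteGraph (∅ : Finset (Fin m × Fin n)) = ⊥ := by
  ext u v
  simp [bipartiteGraph]

lemma numComponents_empty {m n : ℕ} : numComponents (∅ : Finset (Fin m × Fin n)) = m + n := by
  have hbij : Function.Bijective
      (bipartiteGraph (∅ : Finset (Fin m × Fin n))).connectedComponentMk := by
    constructor
    · intro u v h
      have hr := (SimpleGraph.ConnectedComponent.eq).mp h
      rw [bipartiteGraph_empty] at hr
      exact SimpleGraph.reachable_bot.mp hr
    · exact fun c => c.exists_rep
  rw [numComponents, ← Nat.card_eq_of_bijective _ hbij, Nat.card_sum]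
  simp

lemma components_bound {m n : ℕ} (F : Finset (Fin m × Fin n)) :
    m + n ≤ F.card + numComponents F := by
  classical
  induction F using Finset.induction_on with
  | empty => simp [numComponents_empty]
  | insert _ _ he ih =>
    rename_i e F
    have h1 : numComponents F ≤ numComponents (insert e F) + 1 := by
      unfold numComponents
      rw [bipartiteGraph_insert]
      exact card_cc_sup_edge_le _ _ _
    rw [Finset.card_insert_of_notMem he]
    omega

lemma flow_formula {m n : ℕ} (ν : Fin m → ℝ) (μ : Fin n → ℝ) (E : Finset (Fin m × Fin n))
    (a : Fin m) (b : Fin n)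
    (hbr : ¬ (bipartiteGraph (E.erase (a, b))).Reachable (Sum.inl a) (Sum.inr b))
    (x : Fin m → Fin n → ℝ) (hx : x ∈ transportationPolytope ν μ E) :
    x a b =
      (∑ i ∈ Finset.univ.filter (fun i =>
          (bipartiteGraph (E.erase (a, b))).Reachable (Sum.inl a) (Sum.inl i)), ν i) -
      ∑ j ∈ Finset.univ.filter (fun j =>
          (bipartiteGraph (E.erase (a, b))).Reachable (Sum.inl a) (Sum.inr j)), μ j := by
  classical
  obtain ⟨hpos, hrow, hcol, hsupp⟩ := hx
  set G' := bipartiteGraph (E.erase (a, b)) with hG'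
  set SI : Finset (Fin m) :=
    Finset.univ.filter (fun i => G'.Reachable (Sum.inl a) (Sum.inl i)) with hSI
  set SJ : Finset (Fin n) :=
    Finset.univ.filter (fun j => G'.Reachable (Sum.inl a) (Sum.inr j)) with hSJ
  have haSI : a ∈ SI := by
    simp only [hSI, Finset.mem_filter, Finset.mem_univ, true_and]
    exact SimpleGraph.Reachable.refl _
  have hbSJ : b ∉ SJ := by simpa [hSJ] using hbr
  have hiff : ∀ i j, (i, j) ∈ E.erase (a, b) → (i ∈ SI ↔ j ∈ SJ) := by
    intro i j hij
    have hadj : G'.Adj (Sum.inl i) (Sum.inr j) := bipartite_adj hij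
    simp only [hSI, hSJ, Finset.mem_filter, Finset.mem_univ, true_and]
    exact ⟨fun h => h.trans hadj.reachable, fun h => h.trans hadj.symm.reachable⟩
  have hz1 : ∀ i j, i ∉ SI → j ∈ SJ → x i j = 0 := by
    intro i j hi hj
    by_cases hE : (i, j) ∈ E
    · rcases eq_or_ne (i, j) (a, b) with heq | hne
      · rw [Prod.mk.injEq] at heq
        obtain ⟨rfl, rfl⟩ := heq
        exact absurd haSI hi
      · exact absurd ((hiff i j (Finset.mem_erase.mpr ⟨hne, hE⟩)).mpr hj) hi
    · exact hsupp i j hE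
  have hz2 : ∀ i j, i ∈ SI → j ∉ SJ → (i, j) ≠ (a, b) → x i j = 0 := by
    intro i j hi hj hne
    by_cases hE : (i, j) ∈ E
    · exact absurd ((hiff i j (Finset.mem_erase.mpr ⟨hne, hE⟩)).mp hi) hj
    · exact hsupp i j hE
  have h1 : ∑ i ∈ SI, ν i =
      (∑ i ∈ SI, ∑ j ∈ SJ, x i j) + ∑ i ∈ SI, ∑ j ∈ SJᶜ, x i j := by
    rw [← Finset.sum_add_distrib]
    refine Finset.sum_congr rfl fun i _ => ?_
    rw [Finset.sum_add_sum_compl]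
    exact (hrow i).symm
  have h2 : ∑ j ∈ SJ, μ j =
      (∑ j ∈ SJ, ∑ i ∈ SI, x i j) + ∑ j ∈ SJ, ∑ i ∈ SIᶜ, x i j := by
    rw [← Finset.sum_add_distrib]
    refine Finset.sum_congr rfl fun j _ => ?_
    rw [Finset.sum_add_sum_compl]
    exact (hcol j).symm
  have h3 : ∑ j ∈ SJ, ∑ i ∈ SIᶜ, x i j = 0 :=
    Finset.sum_eq_zero fun j hj => Finset.sum_eq_zero fun i hi =>
      hz1 i j (Finset.mem_compl.mp hi) hj
  have h4 : ∑ i ∈ SI, ∑ j ∈ SJᶜ, x i j = x a b := by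
    rw [← Finset.sum_product']
    refine Finset.sum_eq_single_of_mem (a, b)
      (Finset.mem_product.mpr ⟨haSI, Finset.mem_compl.mpr hbSJ⟩) ?_
    rintro ⟨i, j⟩ hij hne
    obtain ⟨hi, hj⟩ := Finset.mem_product.mp hij
    exact hz2 i j hi (Finset.mem_compl.mp hj) hne
  have hcomm : ∑ i ∈ SI, ∑ j ∈ SJ, x i j = ∑ j ∈ SJ, ∑ i ∈ SI, x i j :=
    Finset.sum_comm
  linarith [h1, h2, h3, h4, hcomm]

end AuxLemmas

/-- necessity: if `T_E(ν,μ)` is nonempty with ERP number `d`, then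
`|E| ≥ m + n − d`, and `|E| ≥ m + n − d + 1` whenever `d < d_⋆`. -/
theorem stmt_7 {m n : ℕ} (hm : 1 ≤ m) (hn : 1 ≤ n)
    (ν : Fin m → ℕ) (μ : Fin n → ℕ)
    (hν : ∀ i, 0 < ν i) (hμ : ∀ j, 0 < μ j)
    (htot : (∑ i, ν i) = ∑ j, μ j)
    (E : Finset (Fin m × Fin n)) (d : ℕ)
    (hne : (transportationPolytope (fun i => (ν i : ℝ)) (fun j => (μ j : ℝ)) E).Nonempty)
    (hd : erpNumber (fun i => (ν i : ℝ)) (fun j => (μ j : ℝ)) E = d) :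
    m + n ≤ E.card + d ∧ (d < dStar ν μ → m + n + 1 ≤ E.card + d) := by
  classical
  unfold erpNumber at hd
  set νr : Fin m → ℝ := fun i => (ν i : ℝ) with hνr
  set μr : Fin n → ℝ := fun j => (μ j : ℝ) with hμr
  have hL : m + n ≤ (E \ redundantEdges νr μr E).card + d := by
    have h := components_bound (E \ redundantEdges νr μr E)
    rwa [hd] at h
  have hsub : E \ redundantEdges νr μr E ⊆ E := Finset.sdiff_subset
  have part1 : m + n ≤ E.card + d :=
    hL.trans (Nat.add_le_add_right (Finset.card_le_card hsub) d)
  refine ⟨part1, fun hlt => ?_⟩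
  by_contra hcon
  have heq : E.card + d = m + n := by omega
  have hcard' : E.card ≤ (E \ redundantEdges νr μr E).card := by omega
  have hEE' : E \ redundantEdges νr μr E = E :=
    Finset.eq_of_subset_of_card_le hsub hcard'
  have hcomp : numComponents E = d := by rw [← hEE']; exact hd
  obtain ⟨x0, hx0⟩ := hne
  have hsupported : ∀ e ∈ E,
      ∃ x ∈ transportationPolytope νr μr E, 0 < x e.1 e.2 := by
    intro e he
    have heE' : e ∈ E \ redundantEdges νr μr E := hEE'.symm ▸ he
    have hnr : e ∉ redundantEdges νr μr E := (Finset.mem_sdiff.mp heE').2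
    rw [redundantEdges, Finset.mem_filter] at hnr
    push_neg at hnr
    obtain ⟨x, hx, hxe⟩ := hnr he
    exact ⟨x, hx, lt_of_le_of_ne (hx.1 e.1 e.2) (Ne.symm hxe)⟩
  have hbr : ∀ e ∈ E,
      ¬ (bipartiteGraph (E.erase e)).Reachable (Sum.inl e.1) (Sum.inr e.2) := by
    intro e he hreach
    have hins : insert e (E.erase e) = E := Finset.insert_erase he
    have hnum : numComponents E = numComponents (E.erase e) := by
      conv_lhs => rw [← hins]
      unfold numComponents
      rw [bipartiteGraph_insert]
      exact card_cc_sup_edge_eq _ hreach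
    have hb := components_bound (E.erase e)
    have hcard : (E.erase e).card = E.card - 1 := Finset.card_erase_of_mem he
    have hpos : 1 ≤ E.card := Finset.card_pos.mpr ⟨e, he⟩
    omega
  have hgν : ∀ i, gcdVec ν μ ∣ ν i :=
    fun i => (Nat.gcd_dvd_left _ _).trans (Finset.gcd_dvd (Finset.mem_univ i))
  have hgμ : ∀ j, gcdVec ν μ ∣ μ j :=
    fun j => (Nat.gcd_dvd_right _ _).trans (Finset.gcd_dvd (Finset.mem_univ j))
  have hgpos : 0 < gcdVec ν μ := by
    refine Nat.pos_of_ne_zero fun h0 => ?_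
    have := hgν ⟨0, hm⟩
    rw [h0, Nat.zero_dvd] at this
    exact (hν ⟨0, hm⟩).ne' this
  -- every edge carries at least gcd flow in x0
  have hedge : ∀ e ∈ E, (gcdVec ν μ : ℝ) ≤ x0 e.1 e.2 := by
    intro e he
    obtain ⟨y, hy, hye⟩ := hsupported e he
    have hbre : ¬ (bipartiteGraph (E.erase (e.1, e.2))).Reachable
        (Sum.inl e.1) (Sum.inr e.2) := by
      rw [Prod.mk.eta]; exact hbr e he
    have hx0f := flow_formula νr μr E e.1 e.2 hbre x0 hx0
    have hyf := flow_formula νr μr E e.1 e.2 hbre y hy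
    set Pn : ℕ := ∑ i ∈ Finset.univ.filter (fun i =>
        (bipartiteGraph (E.erase (e.1, e.2))).Reachable (Sum.inl e.1) (Sum.inl i)), ν i with hPn
    set Qn : ℕ := ∑ j ∈ Finset.univ.filter (fun j =>
        (bipartiteGraph (E.erase (e.1, e.2))).Reachable (Sum.inl e.1) (Sum.inr j)), μ j with hQn
    have hPcast : (Pn : ℝ) = ∑ i ∈ Finset.univ.filter (fun i =>
        (bipartiteGraph (E.erase (e.1, e.2))).Reachable (Sum.inl e.1) (Sum.inl i)), νr i := by
      rw [hPn]; push_cast; rfl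
    have hQcast : (Qn : ℝ) = ∑ j ∈ Finset.univ.filter (fun j =>
        (bipartiteGraph (E.erase (e.1, e.2))).Reachable (Sum.inl e.1) (Sum.inr j)), μr j := by
      rw [hQn]; push_cast; rfl
    have hx0v : x0 e.1 e.2 = (Pn : ℝ) - Qn := by rw [hx0f, hPcast, hQcast]
    have hyv : y e.1 e.2 = (Pn : ℝ) - Qn := by rw [hyf, hPcast, hQcast]
    have hQP : Qn < Pn := by
      have h0 : (0 : ℝ) < (Pn : ℝ) - Qn := hyv ▸ hye
      have := sub_pos.mp h0
      exact_mod_cast this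
    have hdvd : gcdVec ν μ ∣ Pn - Qn :=
      Nat.dvd_sub (Finset.dvd_sum fun i _ => hgν i) (Finset.dvd_sum fun j _ => hgμ j)
    have hge : gcdVec ν μ ≤ Pn - Qn := Nat.le_of_dvd (by omega) hdvd
    rw [hx0v]
    calc (gcdVec ν μ : ℝ) ≤ ((Pn - Qn : ℕ) : ℝ) := Nat.cast_le.mpr hge
      _ = (Pn : ℝ) - Qn := by rw [Nat.cast_sub hQP.le]
  -- total mass
  have hsum : ∑ e ∈ E, x0 e.1 e.2 = ((∑ i, ν i : ℕ) : ℝ) := by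
    have hsub2 : E ⊆ Finset.univ ×ˢ Finset.univ := fun p _ => by simp
    rw [Finset.sum_subset hsub2 (fun p _ hp => hx0.2.2.2 p.1 p.2 (by rwa [Prod.mk.eta]))]
    rw [Finset.sum_product]
    push_cast
    exact Finset.sum_congr rfl fun i _ => hx0.2.1 i
  have hcard_le : ((E.card * gcdVec ν μ : ℕ) : ℝ) ≤ ((∑ i, ν i : ℕ) : ℝ) := by
    rw [← hsum]
    calc ((E.card * gcdVec ν μ : ℕ) : ℝ) = ∑ _e ∈ E, (gcdVec ν μ : ℝ) := by
          rw [Finset.sum_const, nsmul_eq_mul]; push_cast; ring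
      _ ≤ ∑ e ∈ E, x0 e.1 e.2 := Finset.sum_le_sum hedge
  have hNg : E.card * gcdVec ν μ ≤ ∑ i, ν i := by exact_mod_cast hcard_le
  have hEdiv : E.card ≤ (∑ i, ν i) / gcdVec ν μ :=
    (Nat.le_div_iff_mul_le hgpos).mpr hNg
  have hd1 : 1 ≤ d := by
    rw [← hcomp]
    unfold numComponents
    haveI : Finite (bipartiteGraph E).ConnectedComponent := Quot.finite _
    haveI : Nonempty (bipartiteGraph E).ConnectedComponent :=
      ⟨(bipartiteGraph E).connectedComponentMk (Sum.inl ⟨0, hm⟩)⟩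
    exact Nat.card_pos
  unfold dStar at hlt
  rcases lt_max_iff.mp hlt with h | h
  · omega
  · generalize hq : (∑ i, ν i) / gcdVec ν μ = q at h hEdiv
    omega
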